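/- Let S be a finite abelian group, p a prime, and n ≥ 1. If the group S × Z_{p^n} does not have the periodic tiling (PT) property, then the group S × Z_{p^{n+1}} does not have the periodic tiling (PT) property. -/

import Mathlib

/-- `(Ω, T)` is a tiling pair of the abelian group `G`: every element of `G`
has a unique representation `ω + t` with `ω ∈ Ω`, `t ∈ T`. -/
def IsTilingPair {G : Type*} [AddCommGroup G] (Ω T : Set G) : Prop :=
  ∀ g : G, ∃! p : G × G, p.1 ∈ Ω ∧ p.2 ∈ T ∧ p.1 + p.2 = g

/-- A nonempty subset `A` of `G` is periodic if `A + g = A` for some nonzero `g`. -/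
def IsPeriodic {G : Type*} [AddCommGroup G] (A : Set G) : Prop :=
  A.Nonempty ∧ ∃ g : G, g ≠ 0 ∧ (fun a => a + g) '' A = A

/-- `Ω` is a tile of `G` if it has a tiling complement. -/
def IsTile {G : Type*} [AddCommGroup G] (Ω : Set G) : Prop :=
  ∃ T : Set G, IsTilingPair Ω T

/-- `G` has the periodic tiling (PT) property: for every tiling pair `(Ω, T)`,
either `Ω` is periodic, or `T` can be replaced by a periodic tiling complement. -/
def HasPT (G : Type*) [AddCommGroup G] : Prop :=
  ∀ Ω T : Set G, IsTilingPair Ω T →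
    IsPeriodic Ω ∨ ∃ T' : Set G, IsPeriodic T' ∧ IsTilingPair Ω T'

/-- A tile `Ω` is uniformly periodic if all its tiling complements share a
common nonzero period. -/
def UniformlyPeriodic {G : Type*} [AddCommGroup G] (Ω : Set G) : Prop :=
  ∃ g : G, g ≠ 0 ∧ ∀ T : Set G, IsTilingPair Ω T → (fun t => t + g) '' T = T

/-- A tile `Ω` is dual uniformly periodic if there is a periodic tile `Ω'`
which is a tiling complement of every tiling complement of `Ω`. -/
def DualUniformlyPeriodic {G : Type*} [AddCommGroup G] (Ω : Set G) : Prop :=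
  ∃ Ω' : Set G, IsPeriodic Ω' ∧ IsTile Ω' ∧
    ∀ T : Set G, IsTilingPair Ω T → IsTilingPair Ω' T

/-- `G` has the uniformly periodic tiling (UPT) property: every tile of `G`
is either uniformly periodic or dual uniformly periodic. -/
def HasUPT (G : Type*) [AddCommGroup G] : Prop :=
  ∀ Ω : Set G, IsTile Ω → UniformlyPeriodic Ω ∨ DualUniformlyPeriodic Ω

section Aux

variable {G : Type*} [AddCommGroup G]

lemma per_fwd {A : Set G} {g : G} (h : (fun a => a + g) '' A = A) {a : G} (ha : a ∈ A) :
    a + g ∈ A := h ▸ ⟨a, ha, rfl⟩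

lemma per_bwd {A : Set G} {g : G} (h : (fun a => a + g) '' A = A) {a : G} (ha : a ∈ A) :
    a - g ∈ A := by
  conv at ha => rw [← h]
  obtain ⟨b, hb, rfl⟩ := ha
  simpa using hb

lemma per_nsmul {A : Set G} {g : G} (h : (fun a => a + g) '' A = A) (k : ℕ) :
    (fun a => a + k • g) '' A = A := by
  induction k with
  | zero => simp
  | succ m ih =>
    have hc : (fun a : G => a + (m + 1) • g) = (fun a => a + g) ∘ (fun a => a + m • g) := by
      funext a
      simp only [Function.comp_apply, succ_nsmul]
      abel
    rw [hc, Set.image_comp, ih, h]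

end Aux

lemma key_transfer {G G' : Type*} [AddCommGroup G] [AddCommGroup G']
    (ι : G →+ G') (u : G') (p : ℕ) (hp : 0 < p)
    (h1 : ∀ g' : G', ∃! q : G × ℕ, q.2 < p ∧ g' = ι q.1 + q.2 • u)
    (h2 : ∃ v : G, p • u = ι v)
    (h3 : ∀ h' : G', h' ≠ 0 → (∃ y, ι y = h') ∨ (p • h' ≠ 0 ∧ ∃ y, ι y = p • h'))
    (hG : ¬ HasPT G) : ¬ HasPT G' := by
  have dec : ∀ {x x' : G} {i i' : ℕ}, i < p → i' < p →
      ι x + i • u = ι x' + i' • u → x = x' ∧ i = i' := by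
    intro x x' i i' hi hi' heq
    obtain ⟨q, -, hq⟩ := h1 (ι x + i • u)
    have e1 : ((x, i) : G × ℕ) = q := hq (x, i) ⟨hi, rfl⟩
    have e2 : ((x', i') : G × ℕ) = q := hq (x', i') ⟨hi', heq⟩
    have e3 := e1.trans e2.symm
    exact ⟨congrArg Prod.fst e3, congrArg Prod.snd e3⟩
  rw [HasPT] at hG
  push_neg at hG
  obtain ⟨Ω, T, hpair, hΩ, hT'⟩ := hG
  intro hPT
  set W : Set G' := {w | ∃ x ∈ Ω, ∃ i, i < p ∧ w = ι x + i • u} with hWdef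
  have hWmem : ∀ {x : G} {i : ℕ}, x ∈ Ω → i < p → ι x + i • u ∈ W :=
    fun hx hi => ⟨_, hx, _, hi, rfl⟩
  have hWback : ∀ {z : G}, ι z ∈ W → z ∈ Ω := by
    intro z hz
    obtain ⟨ω', hω', j, hj, hdec'⟩ := hz
    have heq : ι z + 0 • u = ι ω' + j • u := by simpa using hdec'
    obtain ⟨h1', -⟩ := dec hp hj heq
    rw [h1']; exact hω'
  have hWT : IsTilingPair W (ι '' T) := by
    intro g'
    obtain ⟨⟨x, i⟩, ⟨hip, hdec⟩, -⟩ := h1 g'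
    obtain ⟨⟨ω, t⟩, ⟨hω, ht, hsum⟩, hu2⟩ := hpair x
    refine ⟨(ι ω + i • u, ι t), ⟨hWmem hω hip, ⟨t, ht, rfl⟩, ?_⟩, ?_⟩
    · rw [hdec, ← hsum, map_add]; dsimp only; abel
    · rintro ⟨w, s⟩ ⟨⟨ω', hω', j, hjp, rfl⟩, ⟨t', ht', rfl⟩, hsum'⟩
      have heq : ι (ω' + t') + j • u = ι x + i • u := by
        rw [map_add, ← hdec, ← hsum']; dsimp only; abel
      obtain ⟨hxe, hie⟩ := dec hjp hip heq
      have hpe : ((ω', t') : G × G) = (ω, t) := hu2 (ω', t') ⟨hω', ht', hxe⟩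
      have hf1 : ω' = ω := congrArg Prod.fst hpe
      have hf2 : t' = t := congrArg Prod.snd hpe
      rw [hf1, hf2, hie]
  have getper : ∀ (A : Set G') (h : G'), h ≠ 0 → (fun a => a + h) '' A = A →
      ∃ y : G, y ≠ 0 ∧ (fun a => a + ι y) '' A = A := by
    intro A h hh himg
    rcases h3 h hh with ⟨y, hy⟩ | ⟨hph, y, hy⟩
    · exact ⟨y, fun h0 => hh (by rw [← hy, h0, map_zero]), by rw [hy]; exact himg⟩
    · exact ⟨y, fun h0 => hph (by rw [← hy, h0, map_zero]),
        by rw [hy]; exact per_nsmul himg p⟩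
  rcases hPT W (ι '' T) hWT with hWper | ⟨T'', hT''per, hWT''⟩
  · obtain ⟨-, h, hh, himg⟩ := hWper
    obtain ⟨y, hy0, hyper⟩ := getper W h hh himg
    refine hΩ ⟨?_, y, hy0, ?_⟩
    · obtain ⟨⟨ω, t⟩, ⟨hω, -, -⟩, -⟩ := hpair 0
      exact ⟨ω, hω⟩
    · apply Set.Subset.antisymm
      · rintro _ ⟨ω, hω, rfl⟩
        have hιω : ι ω ∈ W := by simpa using hWmem hω hp
        have hmem : ι (ω + y) ∈ W := by
          rw [map_add]; exact per_fwd hyper hιω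
        exact hWback hmem
      · intro ω hω
        have hιω : ι ω ∈ W := by simpa using hWmem hω hp
        have hmem : ι (ω - y) ∈ W := by
          rw [map_sub]; exact per_bwd hyper hιω
        exact ⟨ω - y, hWback hmem, by simp⟩
  · obtain ⟨-, h, hh, himg⟩ := hT''per
    obtain ⟨y, hy0, hyper⟩ := getper T'' h hh himg
    set Tp : Set G := {t | ∃ j, j < p ∧ ι t + j • u ∈ T''} with hTpdef
    have hpair2 : IsTilingPair Ω Tp := by
      intro x
      obtain ⟨⟨w, s⟩, ⟨hw, hs, hsum⟩, hun⟩ := hWT'' (ι x + (p - 1) • u)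
      obtain ⟨ω, hω, i, hip, rfl⟩ := hw
      obtain ⟨⟨τ, j⟩, ⟨hjp, hsdec⟩, -⟩ := h1 s
      have heq : ι (ω + τ) + (i + j) • u = ι x + (p - 1) • u := by
        rw [map_add, add_nsmul, ← hsum, hsdec]; dsimp only; abel
      have hkey : i + j = p - 1 ∧ ω + τ = x := by
        by_cases hc : i + j < p
        · obtain ⟨ha, hb⟩ := dec hc (Nat.sub_lt hp Nat.one_pos) heq
          exact ⟨hb, ha⟩
        · exfalso
          obtain ⟨v, hv⟩ := h2
          obtain ⟨k, hk, hklt⟩ : ∃ k, i + j = k + p ∧ k < p - 1 :=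
            ⟨i + j - p, by omega, by omega⟩
          rw [hk, add_nsmul] at heq
          have heq2 : ι (ω + τ + v) + k • u = ι x + (p - 1) • u := by
            rw [map_add, ← hv, ← heq]; abel
          obtain ⟨-, hb⟩ := dec (by omega) (Nat.sub_lt hp Nat.one_pos) heq2
          omega
      refine ⟨(ω, τ), ⟨hω, ⟨j, hjp, by rw [← hsdec]; exact hs⟩, hkey.2⟩, ?_⟩
      rintro ⟨ω₁, τ₁⟩ ⟨hω₁, ⟨j₁, hj₁p, hmem₁⟩, hsum₁⟩
      have hsum₁' : (ι ω₁ + (p - 1 - j₁) • u) + (ι τ₁ + j₁ • u) = ι x + (p - 1) • u := by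
        have h5 : (p - 1 - j₁) + j₁ = p - 1 := by omega
        calc (ι ω₁ + (p - 1 - j₁) • u) + (ι τ₁ + j₁ • u)
            = ι (ω₁ + τ₁) + ((p - 1 - j₁) + j₁) • u := by rw [map_add, add_nsmul]; abel
          _ = ι x + (p - 1) • u := by rw [hsum₁, h5]
      have e1 := hun (ι ω₁ + (p - 1 - j₁) • u, ι τ₁ + j₁ • u)
        ⟨hWmem hω₁ (by omega), hmem₁, hsum₁'⟩
      have efst : ι ω₁ + (p - 1 - j₁) • u = ι ω + i • u := congrArg Prod.fst e1
      have esnd : ι τ₁ + j₁ • u = s := congrArg Prod.snd e1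
      have hτe : τ₁ = τ := (dec hj₁p hjp (esnd.trans hsdec)).1
      have hωe : ω₁ = ω := (dec (by omega) hip efst).1
      rw [hτe, hωe]
    refine hT' Tp ⟨?_, y, hy0, ?_⟩ hpair2
    · obtain ⟨⟨ω, τ⟩, ⟨-, hτ, -⟩, -⟩ := hpair2 0
      exact ⟨τ, hτ⟩
    · apply Set.Subset.antisymm
      · rintro _ ⟨τ, ⟨j, hj, hmem⟩, rfl⟩
        refine ⟨j, hj, ?_⟩
        have h6 : ι (τ + y) + j • u = (ι τ + j • u) + ι y := by rw [map_add]; abel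
        rw [h6]
        exact per_fwd hyper hmem
      · intro τ hτ
        obtain ⟨j, hj, hmem⟩ := hτ
        refine ⟨τ - y, ⟨j, hj, ?_⟩, by simp⟩
        have h7 : ι (τ - y) + j • u = (ι τ + j • u) - ι y := by rw [map_sub]; abel
        rw [h7]
        exact per_bwd hyper hmem


/-- If `S × Z_{p^n}` does not have the PT property, then `S × Z_{p^{n+1}}`
does not have the PT property. -/
theorem not_hasPT_prod_pow_succ (S : Type*) [AddCommGroup S] [Fintype S]
    (p : ℕ) (hp : p.Prime) (n : ℕ) (hn : 1 ≤ n)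
    (hS : ¬ HasPT (S × ZMod (p ^ n))) :
    ¬ HasPT (S × ZMod (p ^ (n + 1))) := by
  haveI : NeZero (p ^ n) := ⟨(pow_pos hp.pos n).ne'⟩
  haveI : NeZero (p ^ (n + 1)) := ⟨(pow_pos hp.pos (n + 1)).ne'⟩
  set N := p ^ n with hN
  set M := p ^ (n + 1) with hM
  have hppos : 0 < p := hp.pos
  have hfz : (zmultiplesHom (ZMod M) (p : ZMod M)) (N : ℤ) = 0 := by
    simp only [zmultiplesHom_apply]
    rw [zsmul_eq_mul]
    push_cast
    rw [← Nat.cast_mul, ← pow_succ]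
    exact ZMod.natCast_self M
  set f : ZMod N →+ ZMod M := ZMod.lift N ⟨zmultiplesHom (ZMod M) (p : ZMod M), hfz⟩ with hfdef
  have lemf : ∀ k : ℕ, f ((k : ℕ) : ZMod N) = ((k * p : ℕ) : ZMod M) := by
    intro k
    have hc : ((k : ℕ) : ZMod N) = ((k : ℤ) : ZMod N) := by push_cast; rfl
    rw [hc, hfdef, ZMod.lift_coe]
    simp only [zmultiplesHom_apply]
    rw [zsmul_eq_mul]
    push_cast
    ring
  have validM : ∀ z : ZMod M, ((z.val : ℕ) : ZMod M) = z := fun z => ZMod.natCast_rightInverse z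
  have validN : ∀ z : ZMod N, ((z.val : ℕ) : ZMod N) = z := fun z => ZMod.natCast_rightInverse z
  have h1core : ∀ z : ZMod M, ∃! q : ZMod N × ℕ, q.2 < p ∧ z = f q.1 + q.2 • (1 : ZMod M) := by
    intro z
    have hdm : z.val / p * p + z.val % p = z.val := by
      conv_rhs => rw [← Nat.div_add_mod z.val p]
      ring
    refine ⟨(((z.val / p : ℕ) : ZMod N), z.val % p), ⟨Nat.mod_lt _ hppos, ?_⟩, ?_⟩
    · have h8 : (z.val % p) • (1 : ZMod M) = ((z.val % p : ℕ) : ZMod M) := by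
        rw [nsmul_eq_mul, mul_one]
      rw [lemf, h8, ← Nat.cast_add, hdm, validM z]
    · rintro ⟨x, i⟩ ⟨hip, heq⟩
      have h10 : f x = ((x.val * p : ℕ) : ZMod M) := by
        conv_lhs => rw [← validN x]
        rw [lemf]
      have h9 : z = ((x.val * p + i : ℕ) : ZMod M) := by
        rw [heq, h10, nsmul_eq_mul, mul_one]
        push_cast
        ring
      have hlt : x.val * p + i < M := by
        have h11 : x.val < N := ZMod.val_lt x
        calc x.val * p + i < x.val * p + p := by omega
          _ = (x.val + 1) * p := by ring
          _ ≤ N * p := Nat.mul_le_mul_right p h11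
          _ = M := (pow_succ p n).symm
      have hzval : z.val = x.val * p + i := by
        rw [h9, ZMod.val_natCast, Nat.mod_eq_of_lt hlt]
      have hi' : z.val % p = i := by
        rw [hzval, Nat.mul_comm, Nat.mul_add_mod, Nat.mod_eq_of_lt hip]
      have hd' : z.val / p = x.val := by
        rw [hzval, Nat.mul_comm, Nat.mul_add_div hppos, Nat.div_eq_of_lt hip, Nat.add_zero]
      simp only [Prod.mk.injEq]
      constructor
      · rw [hd']
        exact (validN x).symm
      · exact hi'.symm
  have h3core : ∀ z : ZMod M, z ≠ 0 →
      (∃ x : ZMod N, f x = z) ∨ (p • z ≠ 0 ∧ ∃ x : ZMod N, f x = p • z) := by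
    intro z hz
    by_cases hpd : p ∣ z.val
    · left
      refine ⟨((z.val / p : ℕ) : ZMod N), ?_⟩
      rw [lemf, Nat.div_mul_cancel hpd, validM z]
    · right
      have hsm : p • z = ((z.val * p : ℕ) : ZMod M) := by
        rw [nsmul_eq_mul]
        conv_lhs => rw [← validM z]
        push_cast
        ring
      refine ⟨?_, ((z.val : ℕ) : ZMod N), by rw [lemf, ← hsm]⟩
      rw [hsm]
      intro h0
      rw [ZMod.natCast_eq_zero_iff] at h0
      have hMNp : M = N * p := by rw [hM, hN, pow_succ]
      have h0' : N * p ∣ z.val * p := by rw [← hMNp]; exact h0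
      have hNd : N ∣ z.val := (Nat.mul_dvd_mul_iff_right hppos).mp h0'
      exact hpd (dvd_trans (dvd_pow_self p (by omega : n ≠ 0)) hNd)
  set ι : (S × ZMod N) →+ (S × ZMod M) := AddMonoidHom.prodMap (AddMonoidHom.id S) f with hιdef
  have ιapp : ∀ (a : S) (b : ZMod N), ι (a, b) = (a, f b) := fun a b => rfl
  set u : S × ZMod M := ((0 : S), (1 : ZMod M)) with hudef
  have usmul : ∀ i : ℕ, i • u = ((0 : S), i • (1 : ZMod M)) := by
    intro i; rw [hudef, Prod.smul_mk, smul_zero]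
  have h1' : ∀ g' : S × ZMod M, ∃! q : (S × ZMod N) × ℕ, q.2 < p ∧ g' = ι q.1 + q.2 • u := by
    rintro ⟨s, z⟩
    obtain ⟨⟨x, i⟩, ⟨hip, hz⟩, hun⟩ := h1core z
    refine ⟨((s, x), i), ⟨hip, ?_⟩, ?_⟩
    · rw [ιapp, usmul, Prod.mk_add_mk, add_zero]
      simp only [Prod.mk.injEq]
      exact ⟨trivial, hz⟩
    · rintro ⟨⟨s', x'⟩, i'⟩ ⟨hi'p, heq⟩
      rw [ιapp, usmul, Prod.mk_add_mk, add_zero] at heq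
      have hfst : s = s' := congrArg Prod.fst heq
      have hsnd : z = f x' + i' • (1 : ZMod M) := congrArg Prod.snd heq
      have he := hun (x', i') ⟨hi'p, hsnd⟩
      simp only [Prod.mk.injEq] at he ⊢
      exact ⟨⟨hfst.symm, he.1⟩, he.2⟩
  have h2' : ∃ v : S × ZMod N, p • u = ι v := by
    refine ⟨((0 : S), (1 : ZMod N)), ?_⟩
    rw [ιapp, usmul]
    have h13 : f (1 : ZMod N) = ((p : ℕ) : ZMod M) := by
      have hl := lemf 1
      rwa [Nat.cast_one, one_mul] at hl
    simp only [Prod.mk.injEq]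
    refine ⟨trivial, ?_⟩
    rw [h13, nsmul_eq_mul, mul_one]
  have h3' : ∀ h' : S × ZMod M, h' ≠ 0 →
      (∃ y, ι y = h') ∨ (p • h' ≠ 0 ∧ ∃ y, ι y = p • h') := by
    rintro ⟨s, z⟩ hne
    by_cases hz : z = 0
    · left
      refine ⟨(s, 0), ?_⟩
      rw [ιapp, map_zero, hz]
    · rcases h3core z hz with ⟨x, hx⟩ | ⟨hpz, x, hx⟩
      · left
        exact ⟨(s, x), by rw [ιapp, hx]⟩
      · right
        have hps : p • ((s, z) : S × ZMod M) = (p • s, p • z) := Prod.smul_mk p s z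
        constructor
        · intro h0
          rw [hps] at h0
          exact hpz (congrArg Prod.snd h0)
        · exact ⟨(p • s, x), by rw [ιapp, hx, hps]⟩
  exact key_transfer ι u p hppos h1' h2' h3' hS
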